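/- Extraction recovers the channel from a quantum pair: Let σ be a quantum state on ℂ^n that is positive definite (hence invertible), and let c : Fin m → Fin m → Matrix (Fin n) (Fin n) ℂ be a unital channel representation (∑_k c k k = 1). Define pair(σ,c) (i,k) (j,ℓ) := conj((√σ * c k ℓ * √σ) i j). Then for all k, ℓ ∈ Fin m: ∑_{i,j} conj(pair(σ,c) (i,k) (j,ℓ)) • ((√σ)⁻¹ * E i j * (√σ)⁻¹) = c k ℓ, where E i j denotes the single-entry matrix |i⟩⟨j| (Matrix.stdBasisMatrix i j 1). -/

import Mathlib

open Matrix
open scoped ComplexOrder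

/-- The positive semidefinite square root of a positive semidefinite matrix
(definition from the older Mathlib, since removed). -/
noncomputable def Matrix.PosSemidef.sqrt {n : Type*} [Fintype n] [DecidableEq n] {𝕜 : Type*}
    [RCLike 𝕜] {A : Matrix n n 𝕜} (hA : A.PosSemidef) : Matrix n n 𝕜 :=
  (hA.1.eigenvectorUnitary : Matrix n n 𝕜) * diagonal (fun i => ((√(hA.1.eigenvalues i) : ℝ) : 𝕜)) *
    (star hA.1.eigenvectorUnitary : Matrix n n 𝕜)

theorem Matrix.PosSemidef.sqrt_mul_self {n : Type*} [Fintype n] [DecidableEq n] {𝕜 : Type*}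
    [RCLike 𝕜] {A : Matrix n n 𝕜} (hA : A.PosSemidef) : hA.sqrt * hA.sqrt = A := by
  conv_rhs => rw [hA.1.spectral_theorem, Unitary.conjStarAlgAut_apply]
  unfold Matrix.PosSemidef.sqrt
  have hu : (star hA.1.eigenvectorUnitary : Matrix n n 𝕜) * hA.1.eigenvectorUnitary = 1 := by simp
  calc _ = (hA.1.eigenvectorUnitary : Matrix n n 𝕜)
        * (diagonal (fun i => ((√(hA.1.eigenvalues i) : ℝ) : 𝕜))
          * ((star hA.1.eigenvectorUnitary : Matrix n n 𝕜) * hA.1.eigenvectorUnitary)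
          * diagonal (fun i => ((√(hA.1.eigenvalues i) : ℝ) : 𝕜)))
        * (star hA.1.eigenvectorUnitary : Matrix n n 𝕜) := by simp only [Matrix.mul_assoc]
    _ = _ := by
      rw [hu, Matrix.mul_one, diagonal_mul_diagonal]
      congr 3
      funext i
      simp only [Function.comp_apply, ← RCLike.ofReal_mul]
      rw [Real.mul_self_sqrt (hA.eigenvalues_nonneg i)]

/-- Extraction recovers the channel from a quantum pair: for a positive definite
state `σ` and a unital channel representation `c`, extracting from
`pair(σ,c) (i,k) (j,ℓ) = conj((√σ * c k ℓ * √σ) i j)` gives back `c`. -/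
theorem extr_pair {n m : ℕ}
    (σ : Matrix (Fin n) (Fin n) ℂ)
    (hσ : σ.PosDef) (hσtr : σ.trace = 1)
    (c : Fin m → Fin m → Matrix (Fin n) (Fin n) ℂ)
    (hc : (∑ k, c k k) = 1) :
    ∀ k ℓ, (∑ i, ∑ j,
        (starRingEnd ℂ) ((starRingEnd ℂ) ((hσ.posSemidef.sqrt * c k ℓ * hσ.posSemidef.sqrt) i j))
          • ((hσ.posSemidef.sqrt)⁻¹ * Matrix.single i j 1 * (hσ.posSemidef.sqrt)⁻¹))
      = c k ℓ := by
  intro k ℓ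
  set S := hσ.posSemidef.sqrt with hS
  have hdet : IsUnit S.det := by
    have h2 : S.det * S.det = σ.det := by
      rw [← Matrix.det_mul, hσ.posSemidef.sqrt_mul_self]
    have hσd : σ.det ≠ 0 := ne_of_gt hσ.det_pos
    refine isUnit_iff_ne_zero.mpr fun h => hσd ?_
    rw [← h2, h, mul_zero]
  set M := S * c k ℓ * S with hM
  have key : (∑ i, ∑ j, (M i j) • (S⁻¹ * Matrix.single i j 1 * S⁻¹))
      = S⁻¹ * M * S⁻¹ := by
    conv_rhs => rw [Matrix.matrix_eq_sum_single M]
    simp_rw [Finset.mul_sum, Finset.sum_mul]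
    refine Finset.sum_congr rfl fun i _ => Finset.sum_congr rfl fun j _ => ?_
    rw [show Matrix.single i j (M i j) = (M i j) • Matrix.single i j 1 by
      rw [Matrix.smul_single, smul_eq_mul, mul_one]]
    rw [Matrix.mul_smul, Matrix.smul_mul]
  simp only [Complex.conj_conj]
  rw [key, hM, ← Matrix.mul_assoc, ← Matrix.mul_assoc, Matrix.nonsing_inv_mul _ hdet,
    Matrix.one_mul, Matrix.mul_assoc, Matrix.mul_nonsing_inv _ hdet, Matrix.mul_one]
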